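/- Let A be a 2×2 quaternionic matrix. Then A satisfies A*QA = Q and A·(1,1)ᵀ = (1,1)ᵀ if and only if there exists q ∈ ℍ with Re q = 0 such that A = [[1+q, −q],[−star q, 1+star q]]. That is, the stabilizer in Sp(1,1) of the null spinor s₀ = (1,1)ᵀ is exactly the set G₀ = {[[1+q, −q],[−star q, 1+star q]] : q ∈ Im ℍ}. -/

import Mathlib

open Matrix

/-- The matrix `Q = diag(1, -1)` defining the quaternionic Hermitian form of signature (1,1). -/
noncomputable def Qm : Matrix (Fin 2) (Fin 2) (Quaternion ℝ) := !![1, 0; 0, -1]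

/-- The stabilizer in `Sp(1,1)` of the null spinor `s₀ = (1,1)ᵀ ∈ ℍ²` is exactly the set
`G₀ = {[[1+q, -q],[-q̄, 1+q̄]] : q ∈ Im ℍ}`. -/
theorem sp11_stabilizer_null_spinor (A : Matrix (Fin 2) (Fin 2) (Quaternion ℝ)) :
    (Aᴴ * Qm * A = Qm ∧ A.mulVec ![1, 1] = ![1, 1]) ↔
      ∃ q : Quaternion ℝ, q.re = 0 ∧ A = !![1 + q, -q; -star q, 1 + star q] := by
  constructor
  · rintro ⟨h1, h2⟩
    have e00 := congrFun (congrFun h1 0) 0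
    have e01 := congrFun (congrFun h1 0) 1
    have v0 := congrFun h2 0
    have v1 := congrFun h2 1
    simp [Qm, Matrix.mul_apply, Matrix.mulVec, Matrix.conjTranspose_apply,
      Fin.sum_univ_two, dotProduct] at e00 e01 v0 v1
    obtain ⟨a, b, c, d, ha, hb, hc, hd⟩ :
        ∃ a b c d : Quaternion ℝ, A 0 0 = a ∧ A 0 1 = b ∧ A 1 0 = c ∧ A 1 1 = d :=
      ⟨_, _, _, _, rfl, rfl, rfl, rfl⟩
    simp only [ha, hb, hc, hd] at e00 e01 v0 v1
    have hb' : b = 1 - a := eq_sub_of_add_eq' v0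
    have hd' : d = 1 - c := eq_sub_of_add_eq' v1
    have h3 : star a - star c = 1 := by
      calc star a - star c
          = (star a * b + -(star c * d)) + (star a * a + -(star c * c)) := by
            rw [hb', hd']; noncomm_ring
        _ = 0 + 1 := by rw [e01, e00]
        _ = 1 := zero_add 1
    have h4 : a - c = 1 := by
      have := congrArg star h3
      simpa using this
    have ha' : a = 1 + c := by
      rw [sub_eq_iff_eq_add] at h4; exact h4
    have hsa : star a = 1 + star c := by rw [ha']; simp
    have h5 : (1 + star c) * (1 + c) + -(star c * c) = 1 := by
      rw [← hsa, ← ha']; exact e00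
    have h6 : 1 + (c + star c) = 1 := by
      calc 1 + (c + star c) = (1 + star c) * (1 + c) + -(star c * c) := by noncomm_ring
        _ = 1 := h5
    have h7 : c + star c = 0 := by rwa [add_eq_left] at h6
    have hcre : c.re = 0 := by
      have := congrArg QuaternionAlgebra.re h7
      simp at this
      rw [show QuaternionAlgebra.re (0 : Quaternion ℝ) = 0 from rfl] at this
      linarith
    have hsc : star c = -c := Quaternion.star_eq_neg.mpr hcre
    refine ⟨c, hcre, ?_⟩
    funext i j
    fin_cases i <;> fin_cases j <;>
      simp [ha, hb, hc, hd, ha', hb', hd', hsc] <;> noncomm_ring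
  · rintro ⟨q, hq, rfl⟩
    have hsq : star q = -q := Quaternion.star_eq_neg.mpr hq
    constructor
    · funext i j
      fin_cases i <;> fin_cases j <;>
        simp [Qm, Matrix.mul_apply, Matrix.conjTranspose_apply, Fin.sum_univ_two,
          hsq] <;> noncomm_ring
    · funext i
      fin_cases i <;>
        simp [Matrix.mulVec, dotProduct, Fin.sum_univ_two, hsq]
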